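/- Assume p satisfies hypothesis (H) at t with p(t,0) = t. If f and g are both p-differentiable at t and g(t) ≠ 0, then f/g is p-differentiable at t and D_p(f/g)(t) = (g(t)·D_p f(t) − f(t)·D_p g(t)) / g(t)². -/

import Mathlib

open Filter Set Topology

/-- Quotient rule for p-derivatives, under hypothesis (H). -/
theorem pDeriv_div (f g : ℝ → ℝ) (p : ℝ → ℝ → ℝ) (t Lf Lg : ℝ)
    (hp0 : p t 0 = t)
    (hpc : ContinuousAt (fun h => p t h) 0)
    (hplus hminus : ℝ → ℝ)
    (hpe : ∀ᶠ ε in 𝓝[>] (0:ℝ), p t (hplus ε) = t + ε)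
    (hme : ∀ᶠ ε in 𝓝[>] (0:ℝ), p t (hminus ε) = t - ε)
    (hp_to : Tendsto hplus (𝓝[>] (0:ℝ)) (𝓝 0))
    (hm_to : Tendsto hminus (𝓝[>] (0:ℝ)) (𝓝 0))
    (hf : Tendsto (fun h : ℝ => (f (p t h) - f t) / h) (𝓝[≠] (0:ℝ)) (𝓝 Lf))
    (hg : Tendsto (fun h : ℝ => (g (p t h) - g t) / h) (𝓝[≠] (0:ℝ)) (𝓝 Lg))
    (hgt : g t ≠ 0) :
    Tendsto (fun h : ℝ => (f (p t h) / g (p t h) - f t / g t) / h)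
      (𝓝[≠] (0:ℝ)) (𝓝 ((g t * Lf - f t * Lg) / (g t) ^ 2)) := by
  have hid : Tendsto (fun h : ℝ => h) (𝓝[≠] (0:ℝ)) (𝓝 0) :=
    tendsto_id.mono_left nhdsWithin_le_nhds
  have hq : Tendsto (fun h : ℝ => g (p t h)) (𝓝[≠] (0:ℝ)) (𝓝 (g t)) := by
    have h1 : Tendsto (fun h : ℝ => (g (p t h) - g t) / h * h + g t) (𝓝[≠] (0:ℝ))
        (𝓝 (Lg * 0 + g t)) := (hg.mul hid).add tendsto_const_nhds
    rw [mul_zero, zero_add] at h1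
    refine h1.congr' ?_
    filter_upwards [self_mem_nhdsWithin] with h hh
    have : h ≠ 0 := hh
    field_simp
    ring
  have hne : ∀ᶠ h in 𝓝[≠] (0:ℝ), g (p t h) ≠ 0 := hq.eventually_ne hgt
  have hlim : Tendsto
      (fun h : ℝ => (g t * ((f (p t h) - f t) / h) - f t * ((g (p t h) - g t) / h))
        / (g (p t h) * g t)) (𝓝[≠] (0:ℝ)) (𝓝 ((g t * Lf - f t * Lg) / (g t * g t))) :=
    ((tendsto_const_nhds.mul hf).sub (tendsto_const_nhds.mul hg)).div
      (hq.mul tendsto_const_nhds) (mul_ne_zero hgt hgt)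
  rw [sq]
  refine hlim.congr' ?_
  filter_upwards [hne, self_mem_nhdsWithin] with h hgh hh
  have hh0 : h ≠ 0 := hh
  field_simp
  ring
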